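/- arXiv:2305.05009 — 5 statements merged into one kernel-verified Lean document; each statement's English description precedes it below -/
import Mathlib

section
/- The sequence of multipliers (μ_k) defined recursively by μ_{k+1} = μ_k + (γ_k/ρ)(λ_k − μ_k) with γ_k = ρδ_k/(‖λ_k − μ_k‖² + 1) and δ_k = r^k δ_0 for some r ∈ (0,1), δ_0 ∈ (0,1], is bounded: ‖μ_k‖ ≤ ‖μ_0‖ + (1/2)·δ_0/(1−r) for all k. -/
open RealInnerProductSpace

theorem stmt1 (m : ℕ) (ρ r δ0 : ℝ) (hρ : 0 < ρ)
    (hr : r ∈ Set.Ioo (0:ℝ) 1) (hδ0 : δ0 ∈ Set.Ioc (0:ℝ) 1)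
    (lam μ : ℕ → EuclideanSpace ℝ (Fin m))
    (δ : ℕ → ℝ) (hδ : ∀ k, δ k = r ^ k * δ0)
    (γ : ℕ → ℝ) (hγ : ∀ k, γ k = ρ * δ k / (‖lam k - μ k‖ ^ 2 + 1))
    (hμ : ∀ k, μ (k + 1) = μ k + (γ k / ρ) • (lam k - μ k)) :
    ∀ k, ‖μ k‖ ≤ ‖μ 0‖ + (1 / 2) * (δ0 / (1 - r)) := by
  obtain ⟨hr0, hr1⟩ := hr
  obtain ⟨hδ0pos, _⟩ := hδ0
  have hstep : ∀ k, ‖μ (k + 1) - μ k‖ ≤ δ k / 2 := by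
    intro k
    have hdk : 0 ≤ δ k := by
      rw [hδ k]; positivity
    have hne : (‖lam k - μ k‖ ^ 2 + 1) ≠ 0 := by positivity
    have h1 : μ (k + 1) - μ k = (δ k / (‖lam k - μ k‖ ^ 2 + 1)) • (lam k - μ k) := by
      rw [hμ k, hγ k]
      have : ρ * δ k / (‖lam k - μ k‖ ^ 2 + 1) / ρ = δ k / (‖lam k - μ k‖ ^ 2 + 1) := by
        field_simp
      rw [this]; abel
    rw [h1, norm_smul]
    have hd : (0:ℝ) ≤ ‖lam k - μ k‖ := norm_nonneg _
    have habs : ‖(δ k / (‖lam k - μ k‖ ^ 2 + 1))‖ = δ k / (‖lam k - μ k‖ ^ 2 + 1) := by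
      rw [Real.norm_eq_abs, abs_of_nonneg]; positivity
    rw [habs]
    rw [div_mul_eq_mul_div, div_le_div_iff₀ (by positivity) (by norm_num)]
    nlinarith [sq_nonneg (‖lam k - μ k‖ - 1), hdk, hd]
  have hsum : ∀ k, ‖μ k‖ ≤ ‖μ 0‖ + ∑ i ∈ Finset.range k, δ i / 2 := by
    intro k
    induction k with
    | zero => simp
    | succ n ih =>
      calc ‖μ (n + 1)‖ ≤ ‖μ n‖ + ‖μ (n + 1) - μ n‖ := by
            have := norm_add_le (μ n) (μ (n + 1) - μ n)
            simpa using this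
        _ ≤ (‖μ 0‖ + ∑ i ∈ Finset.range n, δ i / 2) + δ n / 2 :=
            add_le_add ih (hstep n)
        _ = ‖μ 0‖ + ∑ i ∈ Finset.range (n + 1), δ i / 2 := by
            rw [Finset.sum_range_succ]; ring
  intro k
  refine (hsum k).trans ?_
  have hgeo : ∑ i ∈ Finset.range k, δ i / 2 ≤ (1 / 2) * (δ0 / (1 - r)) := by
    have : ∑ i ∈ Finset.range k, δ i / 2 = (δ0 / 2) * ∑ i ∈ Finset.range k, r ^ i := by
      rw [Finset.mul_sum]
      exact Finset.sum_congr rfl fun i _ => by rw [hδ i]; ring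
    rw [this]
    have hsumr : ∑ i ∈ Finset.range k, r ^ i ≤ 1 / (1 - r) := by
      rw [geom_sum_eq (ne_of_lt hr1)]
      have e : (r ^ k - 1) / (r - 1) = (1 - r ^ k) / (1 - r) := by
        rw [div_eq_div_iff (by linarith) (by linarith)]; ring
      rw [e, div_le_div_iff₀ (by linarith) (by linarith)]
      nlinarith [pow_pos hr0 k]
    calc (δ0 / 2) * ∑ i ∈ Finset.range k, r ^ i ≤ (δ0 / 2) * (1 / (1 - r)) := by
          apply mul_le_mul_of_nonneg_left hsumr (by positivity)
      _ = (1 / 2) * (δ0 / (1 - r)) := by ring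
  linarith
end

section
/- Suppose λ_j = μ_j + ρ c(x_j), c is L_c-Lipschitz, μ_{k+1} follows the μ-update with parameter δ_k ∈ (0,1], and γ_k/ρ ∈ (0,1]. Then the dual ascent increase of the reduced Lagrangian satisfies ℓ(x_{k+1}, λ_{k+1}, μ_{k+1}) − ℓ(x_{k+1}, λ_k, μ_k) ≤ ρ L_c² ‖x_{k+1} − x_k‖² + 2δ_k/ρ. -/
open RealInnerProductSpace

set_option maxHeartbeats 1000000 in
theorem stmt8 (n m : ℕ) (ρ Lc δk : ℝ) (hρ : 0 < ρ) (hLc : 0 ≤ Lc)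
    (hδk : δk ∈ Set.Ioc (0:ℝ) 1)
    (f : EuclideanSpace ℝ (Fin n) → ℝ)
    (c : EuclideanSpace ℝ (Fin n) → EuclideanSpace ℝ (Fin m))
    (hLipc : ∀ x y, ‖c x - c y‖ ≤ Lc * ‖x - y‖)
    (l : EuclideanSpace ℝ (Fin n) → EuclideanSpace ℝ (Fin m) →
      EuclideanSpace ℝ (Fin m) → ℝ)
    (hl : ∀ x lam mu, l x lam mu = f x + ⟪lam, c x⟫ - (1 / (2 * ρ)) * ‖lam - mu‖ ^ 2)
    (xk xk1 : EuclideanSpace ℝ (Fin n))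
    (lamk muk lamk1 muk1 : EuclideanSpace ℝ (Fin m))
    (γk : ℝ) (hγk : γk = ρ * δk / (‖lamk - muk‖ ^ 2 + 1))
    (hmu : muk1 = muk + (γk / ρ) • (lamk - muk))
    (hlamk : lamk = muk + ρ • c xk)
    (hlamk1 : lamk1 = muk1 + ρ • c xk1) :
    l xk1 lamk1 muk1 - l xk1 lamk muk ≤ ρ * Lc ^ 2 * ‖xk1 - xk‖ ^ 2 + 2 * δk / ρ := by
  obtain ⟨hδ0, hδ1⟩ := hδk
  set a := c xk with ha
  set b := c xk1 with hb
  have hlm : lamk - muk = ρ • a := by rw [hlamk]; abel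
  have hlm1 : lamk1 - muk1 = ρ • b := by rw [hlamk1]; abel
  have hdl : lamk1 - lamk = γk • a + ρ • (b - a) := by
    have h0 : (γk / ρ) • (lamk - muk) = γk • a := by
      rw [hlm, smul_smul, div_mul_cancel₀ _ hρ.ne']
    rw [hlamk1, hmu, h0, hlamk]
    module
  set s := ‖a‖ with hs
  set d := ‖b - a‖ with hd
  set X := ‖xk1 - xk‖ with hX
  have hs0 : 0 ≤ s := norm_nonneg _
  have hd0 : 0 ≤ d := norm_nonneg _
  have hX0 : 0 ≤ X := norm_nonneg _
  have hdLX : d ≤ Lc * X := hLipc xk1 xk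
  have hnlm : ‖lamk - muk‖ ^ 2 = ρ ^ 2 * s ^ 2 := by
    rw [hlm, norm_smul, Real.norm_eq_abs, abs_of_pos hρ, mul_pow]
  have hnlm1 : ‖lamk1 - muk1‖ ^ 2 = ρ ^ 2 * ‖b‖ ^ 2 := by
    rw [hlm1, norm_smul, Real.norm_eq_abs, abs_of_pos hρ, mul_pow]
  have hγ : γk = ρ * δk / (ρ ^ 2 * s ^ 2 + 1) := by rw [hγk, hnlm]
  have hD : (0:ℝ) < ρ ^ 2 * s ^ 2 + 1 := by positivity
  have hγ0 : 0 ≤ γk := by rw [hγ]; positivity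
  clear_value a b s d X
  -- key identity
  have hkey : l xk1 lamk1 muk1 - l xk1 lamk muk = γk * ⟪a, b⟫ + (ρ / 2) * d ^ 2 := by
    rw [hl, hl, hnlm, hnlm1, ← hb]
    have h1 : ⟪lamk1, b⟫ - ⟪lamk, b⟫ = γk * ⟪a, b⟫ + ρ * ⟪b - a, b⟫ := by
      rw [← inner_sub_left, hdl, inner_add_left, real_inner_smul_left,
        real_inner_smul_left]
    have h2 : ⟪b - a, b⟫ = ‖b‖ ^ 2 - ⟪a, b⟫ := by
      rw [inner_sub_left, real_inner_self_eq_norm_sq]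
    have h3 : d ^ 2 = ‖b‖ ^ 2 - 2 * ⟪a, b⟫ + s ^ 2 := by
      rw [hd, hs, norm_sub_sq_real, real_inner_comm]
    have e1 : 1 / (2 * ρ) * (ρ ^ 2 * ‖b‖ ^ 2) = ρ / 2 * ‖b‖ ^ 2 := by
      field_simp
    have e2 : 1 / (2 * ρ) * (ρ ^ 2 * s ^ 2) = ρ / 2 * s ^ 2 := by
      field_simp
    rw [e1, e2]
    linear_combination h1 + ρ * h2 - (ρ / 2) * h3
  rw [hkey]
  -- bounds
  have hab : ⟪a, b⟫ ≤ s ^ 2 + s * d := by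
    have hsum : a + (b - a) = b := by abel
    have he : ⟪a, b⟫ = ⟪a, a⟫ + ⟪a, b - a⟫ := by rw [← inner_add_right, hsum]
    rw [he, real_inner_self_eq_norm_sq]
    have := real_inner_le_norm a (b - a)
    nlinarith
  have hA : γk * s ^ 2 ≤ δk / ρ := by
    rw [hγ, div_mul_eq_mul_div, div_le_div_iff₀ hD hρ]
    calc ρ * δk * s ^ 2 * ρ = δk * (ρ ^ 2 * s ^ 2) + 0 := by ring
      _ ≤ δk * (ρ ^ 2 * s ^ 2) + δk := by linarith
      _ = δk * (ρ ^ 2 * s ^ 2 + 1) := by ring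
  have hγs : (γk * s) ^ 2 ≤ δk ^ 2 := by
    have h : γk * s = ρ * δk * s / (ρ ^ 2 * s ^ 2 + 1) := by rw [hγ]; ring
    rw [h, div_pow, div_le_iff₀ (by positivity)]
    nlinarith [mul_nonneg (sq_nonneg δk) (sq_nonneg (ρ * s)),
      mul_nonneg (sq_nonneg δk) (sq_nonneg (ρ * s * (ρ * s))), sq_nonneg δk]
  have amgm : ∀ x y : ℝ, x * y ≤ x ^ 2 / (2 * ρ) + ρ * y ^ 2 / 2 := by
    intro x y
    rw [div_add_div _ _ (by positivity : (2*ρ:ℝ) ≠ 0) two_ne_zero,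
      le_div_iff₀ (by positivity)]
    nlinarith [sq_nonneg (x - ρ * y)]
  have hB : γk * (s * d) ≤ ρ * Lc ^ 2 * X ^ 2 / 2 + δk / ρ := by
    have h1 : γk * (s * d) ≤ (γk * s) * (Lc * X) := by
      have hγsnn : 0 ≤ γk * s := mul_nonneg hγ0 hs0
      nlinarith
    have h2 := amgm (γk * s) (Lc * X)
    have h3 : (γk * s) ^ 2 / (2 * ρ) ≤ δk / ρ := by
      rw [div_le_div_iff₀ (by positivity) hρ]
      have e1 : (γk * s) ^ 2 * ρ ≤ δk ^ 2 * ρ := mul_le_mul_of_nonneg_right hγs hρ.le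
      have e2 : δk ^ 2 * ρ ≤ δk * ρ := by
        nlinarith [mul_nonneg (mul_nonneg hδ0.le (sub_nonneg.mpr hδ1)) hρ.le]
      nlinarith [mul_pos hδ0 hρ, e1, e2]
    have h4 : ρ * (Lc * X) ^ 2 / 2 = ρ * Lc ^ 2 * X ^ 2 / 2 := by ring
    linarith [h1, h2, h3, h4.le, h4.ge]
  have hC : (ρ / 2) * d ^ 2 ≤ (ρ / 2) * (Lc ^ 2 * X ^ 2) := by
    have hd2 : d ^ 2 ≤ (Lc * X) ^ 2 := by nlinarith [mul_le_mul hdLX hdLX hd0 (hd0.trans hdLX)]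
    have := mul_le_mul_of_nonneg_left hd2 (by positivity : (0:ℝ) ≤ ρ / 2)
    calc (ρ / 2) * d ^ 2 ≤ ρ / 2 * (Lc * X) ^ 2 := this
      _ = (ρ / 2) * (Lc ^ 2 * X ^ 2) := by ring
  have hmul : γk * ⟪a, b⟫ ≤ γk * (s ^ 2 + s * d) :=
    mul_le_mul_of_nonneg_left hab hγ0
  have hsplit : ρ * Lc ^ 2 * X ^ 2 + 2 * δk / ρ =
      (ρ * Lc ^ 2 * X ^ 2 / 2 + δk / ρ) + (ρ / 2 * (Lc ^ 2 * X ^ 2) + δk / ρ) := by ring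
  rw [hsplit]
  linarith [hA, hB, hC, hmul]
end

section
/- Let g: ℝ^n → ℝ be differentiable with L-Lipschitz gradient on a closed convex set X, and let x⁺ be the minimizer over X of the proximal-linearized model x ↦ g(x₀) + ⟨∇g(x₀), x − x₀⟩ + (η/2)‖x − x₀‖² with η > L and x₀ ∈ X. Then g(x⁺) ≤ g(x₀) − ((η − L)/2)‖x⁺ − x₀‖². -/
open RealInnerProductSpace

theorem stmt9 (n : ℕ) (X : Set (EuclideanSpace ℝ (Fin n)))
    (hXne : X.Nonempty) (hXc : IsClosed X) (hXconv : Convex ℝ X)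
    (g : EuclideanSpace ℝ (Fin n) → ℝ)
    (g' : EuclideanSpace ℝ (Fin n) → EuclideanSpace ℝ (Fin n))
    (hg : ∀ x, HasGradientAt g (g' x) x)
    (L η : ℝ) (hL : 0 ≤ L)
    (hLip : ∀ x ∈ X, ∀ y ∈ X, ‖g' x - g' y‖ ≤ L * ‖x - y‖)
    (hη : L < η)
    (x0 xp : EuclideanSpace ℝ (Fin n)) (hx0 : x0 ∈ X) (hxp : xp ∈ X)
    (hmin : ∀ y ∈ X, ⟪g' x0, xp - x0⟫ + (η / 2) * ‖xp - x0‖ ^ 2 ≤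
      ⟪g' x0, y - x0⟫ + (η / 2) * ‖y - x0‖ ^ 2) :
    g xp ≤ g x0 - ((η - L) / 2) * ‖xp - x0‖ ^ 2 := by
  set v := xp - x0 with hv
  set γ : ℝ → EuclideanSpace ℝ (Fin n) := fun t => x0 + t • v with hγ
  have hγmem : ∀ t ∈ Set.Icc (0:ℝ) 1, γ t ∈ X := by
    intro t ht
    have := hXconv hx0 hxp (by linarith [ht.2] : (0:ℝ) ≤ 1 - t) ht.1 (by ring)
    convert this using 1
    simp only [hγ, hv]
    module
  have hγ0 : γ 0 = x0 := by simp [hγ]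
  have hγ1 : γ 1 = xp := by simp [hγ, hv]
  set h : ℝ → ℝ := fun t => ⟪g' (γ t), v⟫ with hh
  -- derivative of g ∘ γ
  have hderiv : ∀ t : ℝ, HasDerivAt (fun s => g (γ s)) (h t) t := by
    intro t
    have hγd : HasDerivAt γ v t := by
      have : HasDerivAt (fun s : ℝ => s • v) ((1:ℝ) • v) t :=
        (hasDerivAt_id t).smul_const v
      have h2 := this.const_add x0
      rw [one_smul] at h2
      exact h2
    have hfd := (hg (γ t)).hasFDerivAt.comp_hasDerivAt t hγd
    simp [hh, HasGradientAt] at hfd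
    exact hfd
  -- Lipschitz bound on h over [0,1]
  have hbound : ∀ t ∈ Set.Icc (0:ℝ) 1, h t - ⟪g' x0, v⟫ ≤ L * t * ‖v‖ ^ 2 := by
    intro t ht
    have h1 : h t - ⟪g' x0, v⟫ = ⟪g' (γ t) - g' x0, v⟫ := by
      simp [hh, inner_sub_left]
    rw [h1]
    calc ⟪g' (γ t) - g' x0, v⟫ ≤ ‖g' (γ t) - g' x0‖ * ‖v‖ := real_inner_le_norm _ _
      _ ≤ (L * ‖γ t - x0‖) * ‖v‖ := by
          apply mul_le_mul_of_nonneg_right (hLip _ (hγmem t ht) _ hx0) (norm_nonneg _)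
      _ = L * t * ‖v‖ ^ 2 := by
          have : γ t - x0 = t • v := by simp [hγ]
          rw [this, norm_smul, Real.norm_eq_abs, abs_of_nonneg ht.1]; ring
  -- continuity of h on [0,1]
  have hcont : ContinuousOn h (Set.Icc (0:ℝ) 1) := by
    have hlip : LipschitzOnWith (Real.toNNReal (L * ‖v‖ ^ 2)) h (Set.Icc (0:ℝ) 1) := by
      rw [lipschitzOnWith_iff_dist_le_mul]
      intro s hs t ht
      have h1 : h s - h t = ⟪g' (γ s) - g' (γ t), v⟫ := by simp [hh, inner_sub_left]
      have h2 : ‖γ s - γ t‖ = |s - t| * ‖v‖ := by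
        have : γ s - γ t = (s - t) • v := by simp [hγ]; module
        rw [this, norm_smul, Real.norm_eq_abs]
      rw [Real.dist_eq, Real.dist_eq, h1]
      have := abs_real_inner_le_norm (g' (γ s) - g' (γ t)) v
      have h3 : ‖g' (γ s) - g' (γ t)‖ ≤ L * (|s - t| * ‖v‖) := by
        rw [← h2]; exact hLip _ (hγmem s hs) _ (hγmem t ht)
      have h4 : (Real.toNNReal (L * ‖v‖ ^ 2) : ℝ) = L * ‖v‖ ^ 2 := by
        rw [Real.coe_toNNReal]; positivity
      rw [h4]
      nlinarith [norm_nonneg v, abs_nonneg (s - t),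
        mul_le_mul_of_nonneg_right h3 (norm_nonneg v)]
    exact hlip.continuousOn
  have hInt : IntervalIntegrable h MeasureTheory.volume 0 1 :=
    hcont.intervalIntegrable_of_Icc zero_le_one
  -- FTC
  have hftc : ∫ t in (0:ℝ)..1, h t = g xp - g x0 := by
    have := intervalIntegral.integral_eq_sub_of_hasDerivAt
      (f := fun s => g (γ s)) (f' := h)
      (fun t _ => hderiv t) hInt
    rw [this]
    show g (γ 1) - g (γ 0) = _
    rw [hγ0, hγ1]
  -- bound the integral
  have hmono : ∫ t in (0:ℝ)..1, (h t - ⟪g' x0, v⟫) ≤ ∫ t in (0:ℝ)..1, L * t * ‖v‖ ^ 2 := by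
    apply intervalIntegral.integral_mono_on zero_le_one
    · exact hInt.sub intervalIntegrable_const
    · exact Continuous.intervalIntegrable
        ((continuous_const.mul continuous_id).mul continuous_const) 0 1
    · intro t ht; linarith [hbound t ht]
  have hval : ∫ t in (0:ℝ)..1, L * t * ‖v‖ ^ 2 = L / 2 * ‖v‖ ^ 2 := by
    have : ∀ t : ℝ, L * t * ‖v‖ ^ 2 = (L * ‖v‖ ^ 2) * t := fun t => by ring
    simp only [this]
    rw [intervalIntegral.integral_const_mul, integral_id]
    ring
  have hsub : ∫ t in (0:ℝ)..1, (h t - ⟪g' x0, v⟫) =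
      (g xp - g x0) - ⟪g' x0, v⟫ := by
    rw [intervalIntegral.integral_sub hInt intervalIntegrable_const, hftc]
    simp
  have hdescent : g xp ≤ g x0 + ⟪g' x0, v⟫ + L / 2 * ‖v‖ ^ 2 := by
    rw [hsub, hval] at hmono; linarith
  -- use minimality with y = x0
  have hkey := hmin x0 hx0
  simp only [sub_self, inner_zero_right, norm_zero] at hkey
  have hkey' : ⟪g' x0, v⟫ ≤ - (η / 2) * ‖v‖ ^ 2 := by
    rw [hv]; nlinarith [hkey]
  nlinarith [hdescent, hkey', sq_nonneg ‖v‖]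
end

section
/- Combined sufficient decrease: under L_p-Lipschitz gradient of x ↦ ℓ(x,λ,μ) on X, L_c-Lipschitz c, the Algorithm-1 updates, and η > L_p + 2ρL_c², the merit values satisfy ℓ(x_{k+1}, λ_{k+1}, μ_{k+1}) ≤ ℓ(x_k, λ_k, μ_k) − ((η − L_p − 2ρL_c²)/2)‖x_{k+1} − x_k‖² + 2δ_k/ρ. -/
open RealInnerProductSpace

lemma descent_lemma {n : ℕ} (F : EuclideanSpace ℝ (Fin n) → ℝ)
    (g : EuclideanSpace ℝ (Fin n) → EuclideanSpace ℝ (Fin n))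
    (x y : EuclideanSpace ℝ (Fin n)) (L : ℝ) (hL : 0 ≤ L)
    (hgrad : ∀ z, HasGradientAt F (g z) z)
    (hlip : ∀ s ∈ Set.Icc (0:ℝ) 1, ∀ t ∈ Set.Icc (0:ℝ) 1,
      ‖g (x + t • (y - x)) - g (x + s • (y - x))‖ ≤ L * |t - s| * ‖y - x‖) :
    F y ≤ F x + ⟪g x, y - x⟫ + L / 2 * ‖y - x‖ ^ 2 := by
  set Δ := y - x with hΔ
  set h' : ℝ → ℝ := fun t => ⟪g (x + t • Δ), Δ⟫ with hh'
  have hderiv : ∀ t : ℝ, HasDerivAt (fun t : ℝ => F (x + t • Δ)) (h' t) t := by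
    intro t
    have hc : HasDerivAt (fun t : ℝ => x + t • Δ) Δ t := by
      simpa using ((hasDerivAt_id t).smul_const Δ).const_add x
    have hF := (hgrad (x + t • Δ)).hasFDerivAt
    have := hF.comp_hasDerivAt t hc
    exact this
  have hcont : ContinuousOn h' (Set.Icc (0:ℝ) 1) := by
    have hlw : LipschitzOnWith (Real.toNNReal (L * ‖Δ‖)) (fun t => g (x + t • Δ))
        (Set.Icc (0:ℝ) 1) := by
      apply LipschitzOnWith.of_dist_le_mul
      intro s hs t ht
      rw [Real.coe_toNNReal _ (by positivity)]
      have := hlip t ht s hs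
      simp only [dist_eq_norm] at *
      calc ‖g (x + s • Δ) - g (x + t • Δ)‖ ≤ L * |s - t| * ‖Δ‖ := this
        _ = L * ‖Δ‖ * ‖s - t‖ := by rw [Real.norm_eq_abs]; ring
    have : ContinuousOn (fun t => g (x + t • Δ)) (Set.Icc (0:ℝ) 1) := hlw.continuousOn
    exact (this.inner continuousOn_const)
  have hint : IntervalIntegrable h' MeasureTheory.volume 0 1 := by
    apply ContinuousOn.intervalIntegrable
    rwa [Set.uIcc_of_le (by norm_num)]
  have hFTC : F (x + (1:ℝ) • Δ) - F (x + (0:ℝ) • Δ) = ∫ t in (0:ℝ)..1, h' t := by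
    rw [intervalIntegral.integral_eq_sub_of_hasDerivAt (fun t _ => hderiv t) hint]
  have hbound : ∀ t ∈ Set.Icc (0:ℝ) 1, h' t ≤ ⟪g x, Δ⟫ + L * ‖Δ‖ ^ 2 * t := by
    intro t ht
    have key : h' t - ⟪g x, Δ⟫ = ⟪g (x + t • Δ) - g x, Δ⟫ := by
      simp [h', inner_sub_left]
    have h0 : g x = g (x + (0:ℝ) • Δ) := by simp
    have hlb := hlip 0 (by norm_num) t ht
    have hcs : ⟪g (x + t • Δ) - g x, Δ⟫ ≤ ‖g (x + t • Δ) - g x‖ * ‖Δ‖ :=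
      real_inner_le_norm _ _
    have h2 : ‖g (x + t • Δ) - g x‖ ≤ L * t * ‖Δ‖ := by
      rw [h0]
      simpa [abs_of_nonneg ht.1] using hlb
    have h3 : ‖g (x + t • Δ) - g x‖ * ‖Δ‖ ≤ L * t * ‖Δ‖ * ‖Δ‖ :=
      mul_le_mul_of_nonneg_right h2 (norm_nonneg _)
    nlinarith [key, hcs]
  have hmono : (∫ t in (0:ℝ)..1, h' t) ≤ ∫ t in (0:ℝ)..1, (⟪g x, Δ⟫ + L * ‖Δ‖ ^ 2 * t) := by
    apply intervalIntegral.integral_mono_on (by norm_num) hint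
    · exact (by fun_prop : Continuous fun t : ℝ => ⟪g x, Δ⟫ + L * ‖Δ‖ ^ 2 * t).intervalIntegrable _ _
    · exact hbound
  have hrhs : (∫ t in (0:ℝ)..1, (⟪g x, Δ⟫ + L * ‖Δ‖ ^ 2 * t)) = ⟪g x, Δ⟫ + L / 2 * ‖Δ‖ ^ 2 := by
    rw [intervalIntegral.integral_add (intervalIntegrable_const)
      ((by fun_prop : Continuous fun t : ℝ => L * ‖Δ‖ ^ 2 * t).intervalIntegrable _ _)]
    rw [intervalIntegral.integral_const_mul, integral_id,
      intervalIntegral.integral_const]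
    norm_num
    ring
  have h1 : x + (1:ℝ) • Δ = y := by simp [hΔ]
  have h0' : x + (0:ℝ) • Δ = x := by simp
  rw [h1, h0'] at hFTC
  linarith [hFTC, hmono, hrhs.le, hrhs.ge]
set_option maxHeartbeats 4000000 in
theorem stmt17 (n m : ℕ)
    (X : Set (EuclideanSpace ℝ (Fin n)))
    (hXne : X.Nonempty) (hXc : IsClosed X) (hXconv : Convex ℝ X)
    (f : EuclideanSpace ℝ (Fin n) → ℝ)
    (c : EuclideanSpace ℝ (Fin n) → EuclideanSpace ℝ (Fin m))
    (ρ Lp Lc η δk : ℝ) (hρ : 0 < ρ) (hLp : 0 ≤ Lp) (hLc : 0 ≤ Lc)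
    (hδk : δk ∈ Set.Ioc (0:ℝ) 1)
    (l : EuclideanSpace ℝ (Fin n) → EuclideanSpace ℝ (Fin m) →
      EuclideanSpace ℝ (Fin m) → ℝ)
    (hl : ∀ x lam mu, l x lam mu = f x + ⟪lam, c x⟫ - (1 / (2 * ρ)) * ‖lam - mu‖ ^ 2)
    (lamk muk : EuclideanSpace ℝ (Fin m)) (xk xk1 : EuclideanSpace ℝ (Fin n))
    (gx : EuclideanSpace ℝ (Fin n) → EuclideanSpace ℝ (Fin n))
    (hgrad : ∀ x, HasGradientAt (fun y => l y lamk muk) (gx x) x)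
    (hLipg : ∀ x ∈ X, ∀ y ∈ X, ‖gx x - gx y‖ ≤ Lp * ‖x - y‖)
    (hLipc : ∀ x y, ‖c x - c y‖ ≤ Lc * ‖x - y‖)
    (hxk : xk ∈ X) (hxk1 : xk1 ∈ X)
    (hmin : ∀ y ∈ X, ⟪gx xk, xk1 - xk⟫ + (η / 2) * ‖xk1 - xk‖ ^ 2 ≤
      ⟪gx xk, y - xk⟫ + (η / 2) * ‖y - xk‖ ^ 2)
    (γk : ℝ) (hγk : γk = ρ * δk / (‖lamk - muk‖ ^ 2 + 1))
    (muk1 lamk1 : EuclideanSpace ℝ (Fin m))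
    (hmu : muk1 = muk + (γk / ρ) • (lamk - muk))
    (hlamk1 : lamk1 = muk1 + ρ • c xk1)
    (hlamk : lamk = muk + ρ • c xk)
    (hη : Lp + 2 * ρ * Lc ^ 2 < η) :
    l xk1 lamk1 muk1 ≤
      l xk lamk muk - ((η - Lp - 2 * ρ * Lc ^ 2) / 2) * ‖xk1 - xk‖ ^ 2 + 2 * δk / ρ := by
  obtain ⟨hδ0, hδ1⟩ := hδk
  have hρ' : ρ ≠ 0 := ne_of_gt hρ
  -- basic facts
  have hlm : lamk - muk = ρ • c xk := by rw [hlamk]; abel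
  have hnormρ : ‖lamk - muk‖ ^ 2 = ρ ^ 2 * ‖c xk‖ ^ 2 := by
    rw [hlm, norm_smul, mul_pow]
    simp [abs_of_pos hρ]
  have hmu' : muk1 = muk + γk • c xk := by
    rw [hmu, hlm, smul_smul, div_mul_cancel₀ _ hρ']
  have hlm1 : lamk1 - muk1 = ρ • c xk1 := by rw [hlamk1]; abel
  have hnormρ1 : ‖lamk1 - muk1‖ ^ 2 = ρ ^ 2 * ‖c xk1‖ ^ 2 := by
    rw [hlm1, norm_smul, mul_pow]
    simp [abs_of_pos hρ]
  have hcoef : ∀ u : ℝ, 1 / (2 * ρ) * (ρ ^ 2 * u) = ρ / 2 * u := by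
    intro u; field_simp
  -- values of l at the three relevant argument triples
  have eq0 : l xk lamk muk = f xk + ⟪muk, c xk⟫ + (ρ / 2) * ‖c xk‖ ^ 2 := by
    rw [hl, hnormρ, hcoef, hlamk, inner_add_left, real_inner_smul_left,
      real_inner_self_eq_norm_sq]
    ring
  have eqmid : l xk1 lamk muk =
      f xk1 + ⟪muk, c xk1⟫ + ρ * ⟪c xk, c xk1⟫ - (ρ / 2) * ‖c xk‖ ^ 2 := by
    rw [hl, hnormρ, hcoef, hlamk, inner_add_left, real_inner_smul_left]
    ring
  have eq1 : l xk1 lamk1 muk1 =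
      f xk1 + ⟪muk, c xk1⟫ + γk * ⟪c xk, c xk1⟫ + (ρ / 2) * ‖c xk1‖ ^ 2 := by
    rw [hl, hnormρ1, hcoef, hlamk1, hmu', inner_add_left, inner_add_left,
      real_inner_smul_left, real_inner_smul_left, real_inner_self_eq_norm_sq]
    ring
  -- Part A : primal descent
  have hseg : ∀ t ∈ Set.Icc (0:ℝ) 1, xk + t • (xk1 - xk) ∈ X := by
    intro t ht
    have hmem := hXconv hxk hxk1 (by linarith [ht.2] : (0:ℝ) ≤ 1 - t) ht.1 (by ring)
    have hpt : xk + t • (xk1 - xk) = (1 - t) • xk + t • xk1 := by module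
    rw [hpt]
    exact hmem
  have hlipA : ∀ s ∈ Set.Icc (0:ℝ) 1, ∀ t ∈ Set.Icc (0:ℝ) 1,
      ‖gx (xk + t • (xk1 - xk)) - gx (xk + s • (xk1 - xk))‖ ≤ Lp * |t - s| * ‖xk1 - xk‖ := by
    intro s hs t ht
    have h := hLipg _ (hseg t ht) _ (hseg s hs)
    have hd : (xk + t • (xk1 - xk)) - (xk + s • (xk1 - xk)) = (t - s) • (xk1 - xk) := by
      module
    rw [hd, norm_smul, Real.norm_eq_abs] at h
    linarith [h]
  have descent := descent_lemma (fun y => l y lamk muk) gx xk xk1 Lp hLp hgrad hlipA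
  have hminxk := hmin xk hxk
  simp only [sub_self, inner_zero_right, norm_zero] at hminxk
  have hinner : ⟪gx xk, xk1 - xk⟫ ≤ - (η / 2) * ‖xk1 - xk‖ ^ 2 := by
    nlinarith [hminxk]
  have partA : l xk1 lamk muk ≤ l xk lamk muk + (Lp / 2 - η / 2) * ‖xk1 - xk‖ ^ 2 := by
    nlinarith [descent, hinner]
  -- Part B : dual ascent control
  have hip : ⟪c xk, c xk1⟫ = ‖c xk‖ ^ 2 + ⟪c xk, c xk1 - c xk⟫ := by
    rw [inner_sub_right, real_inner_self_eq_norm_sq]; ring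
  have hcs : ⟪c xk, c xk1 - c xk⟫ ≤ ‖c xk‖ * ‖c xk1 - c xk‖ := real_inner_le_norm _ _
  have hB2le : ‖c xk1 - c xk‖ ≤ Lc * ‖xk1 - xk‖ := hLipc xk1 xk
  have hB20 : (0:ℝ) ≤ ‖c xk1 - c xk‖ := norm_nonneg _
  have hDpos : (0:ℝ) < ρ ^ 2 * ‖c xk‖ ^ 2 + 1 := by positivity
  have hγ : γk = ρ * δk / (ρ ^ 2 * ‖c xk‖ ^ 2 + 1) := by rw [hγk, hnormρ]
  have hγ0 : 0 ≤ γk := by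
    rw [hγ]
    exact div_nonneg (mul_nonneg hρ.le hδ0.le) hDpos.le
  have bnd1 : γk * ‖c xk‖ ^ 2 ≤ δk / ρ := by
    rw [hγ, div_mul_eq_mul_div, div_le_div_iff₀ hDpos hρ]
    nlinarith [sq_nonneg (ρ * ‖c xk‖)]
  have bnd2 : (γk * ‖c xk‖) ^ 2 ≤ δk := by
    rw [hγ, div_mul_eq_mul_div, div_pow, div_le_iff₀ (by positivity)]
    nlinarith [sq_nonneg (ρ * ‖c xk‖), hδ0.le, sub_nonneg.mpr hδ1,
      mul_nonneg (mul_nonneg hδ0.le (sub_nonneg.mpr hδ1)) (sq_nonneg (ρ * ‖c xk‖)),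
      mul_nonneg hδ0.le (sq_nonneg (ρ * ‖c xk‖ * ‖c xk‖ * ρ)),
      mul_nonneg hδ0.le (sq_nonneg (ρ * ‖c xk‖))]
  have amgm : γk * (‖c xk‖ * ‖c xk1 - c xk‖) ≤
      (γk * ‖c xk‖) ^ 2 / (2 * ρ) + (ρ / 2) * ‖c xk1 - c xk‖ ^ 2 := by
    have key : (γk * ‖c xk‖) ^ 2 / (2 * ρ) + (ρ / 2) * ‖c xk1 - c xk‖ ^ 2
        - γk * (‖c xk‖ * ‖c xk1 - c xk‖)
        = (γk * ‖c xk‖ - ρ * ‖c xk1 - c xk‖) ^ 2 / (2 * ρ) := by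
      field_simp
      ring
    nlinarith [key, div_nonneg (sq_nonneg (γk * ‖c xk‖ - ρ * ‖c xk1 - c xk‖))
      (by positivity : (0:ℝ) ≤ 2 * ρ)]
  have h2 : (γk * ‖c xk‖) ^ 2 / (2 * ρ) ≤ δk / (2 * ρ) :=
    (div_le_div_iff_of_pos_right (by positivity : (0:ℝ) < 2 * ρ)).mpr bnd2
  have hBB := mul_self_le_mul_self hB20 hB2le
  have h3 : ρ * ‖c xk1 - c xk‖ ^ 2 ≤ ρ * Lc ^ 2 * ‖xk1 - xk‖ ^ 2 := by
    nlinarith [hBB, hρ.le]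
  have hq : δk / ρ + δk / (2 * ρ) + δk / (2 * ρ) = 2 * δk / ρ := by
    field_simp
    ring
  have hq2 : (0:ℝ) ≤ δk / (2 * ρ) := by positivity
  have h1 : γk * ⟪c xk, c xk1 - c xk⟫ ≤ γk * (‖c xk‖ * ‖c xk1 - c xk‖) :=
    mul_le_mul_of_nonneg_left hcs hγ0
  have hsplit : γk * ⟪c xk, c xk1⟫ = γk * ‖c xk‖ ^ 2 + γk * ⟪c xk, c xk1 - c xk⟫ := by
    rw [hip]; ring
  have partB : γk * ⟪c xk, c xk1⟫ + (ρ / 2) * ‖c xk1 - c xk‖ ^ 2 ≤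
      2 * δk / ρ + ρ * Lc ^ 2 * ‖xk1 - xk‖ ^ 2 := by
    linarith [h1, h2, h3, bnd1, amgm, hsplit, hq, hq2]
  have hnbma : ‖c xk1 - c xk‖ ^ 2 = ‖c xk1‖ ^ 2 - 2 * ⟪c xk, c xk1⟫ + ‖c xk‖ ^ 2 := by
    rw [norm_sub_sq_real, real_inner_comm (c xk1) (c xk)]
  have heq : l xk1 lamk1 muk1 = l xk1 lamk muk + γk * ⟪c xk, c xk1⟫
      + (ρ / 2) * ‖c xk1 - c xk‖ ^ 2 := by
    rw [eq1, eqmid, hnbma]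
    ring
  linarith [partA, partB, heq]
end

section
/- Summability transfer for the algorithm's dual increments: if μ_{k+1} = μ_k + (γ_k/ρ)(λ_k − μ_k) with γ_k = ρδ_k/(‖λ_k−μ_k‖²+1), δ_k = r^kδ_0 (r ∈ (0,1), δ_0 ∈ (0,1]), λ_j = μ_j + ρc(x_j) with c L_c-Lipschitz, and Σ‖x_{k+1}−x_k‖² < ∞, then Σ‖μ_{k+1}−μ_k‖² < ∞ and Σ‖λ_{k+1}−λ_k‖² < ∞. -/
open Filter Topology

theorem stmt19 (n m : ℕ) (ρ r δ0 Lc : ℝ) (hρ : 0 < ρ) (hLc : 0 ≤ Lc)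
    (hr : r ∈ Set.Ioo (0:ℝ) 1) (hδ0 : δ0 ∈ Set.Ioc (0:ℝ) 1)
    (c : EuclideanSpace ℝ (Fin n) → EuclideanSpace ℝ (Fin m))
    (hLipc : ∀ x y, ‖c x - c y‖ ≤ Lc * ‖x - y‖)
    (x : ℕ → EuclideanSpace ℝ (Fin n))
    (lam mu : ℕ → EuclideanSpace ℝ (Fin m))
    (δ : ℕ → ℝ) (hδ : ∀ k, δ k = r ^ k * δ0)
    (γ : ℕ → ℝ) (hγ : ∀ k, γ k = ρ * δ k / (‖lam k - mu k‖ ^ 2 + 1))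
    (hmu : ∀ k, mu (k + 1) = mu k + (γ k / ρ) • (lam k - mu k))
    (hlam : ∀ k, lam k = mu k + ρ • c (x k))
    (hxsum : Summable (fun k => ‖x (k + 1) - x k‖ ^ 2)) :
    Summable (fun k => ‖mu (k + 1) - mu k‖ ^ 2) ∧
    Summable (fun k => ‖lam (k + 1) - lam k‖ ^ 2) := by
  have hδpos : ∀ k, 0 < δ k := fun k => by
    rw [hδ]; exact mul_pos (pow_pos hr.1 k) hδ0.1
  have hδle1 : ∀ k, δ k ≤ 1 := fun k => by
    rw [hδ]
    calc r ^ k * δ0 ≤ 1 * 1 := by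
          apply mul_le_mul _ hδ0.2 hδ0.1.le zero_le_one
          exact pow_le_one₀ hr.1.le hr.2.le
      _ = 1 := one_mul 1
  have hδsum : Summable δ := by
    have : Summable (fun k => r ^ k * δ0) :=
      (summable_geometric_of_lt_one hr.1.le hr.2).mul_right δ0
    exact this.congr fun k => (hδ k).symm
  -- key bound on mu increments
  have hmubd : ∀ k, ‖mu (k + 1) - mu k‖ ^ 2 ≤ δ k := by
    intro k
    set a := ‖lam k - mu k‖ with ha
    have ha0 : 0 ≤ a := norm_nonneg _
    have h1 : mu (k + 1) - mu k = (γ k / ρ) • (lam k - mu k) := by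
      rw [hmu k]; abel
    have hγρ : γ k / ρ = δ k / (a ^ 2 + 1) := by
      rw [hγ]; field_simp; ring
    have hnorm : ‖mu (k + 1) - mu k‖ = (δ k / (a ^ 2 + 1)) * a := by
      rw [h1, norm_smul, hγρ, Real.norm_eq_abs, abs_of_nonneg]
      have := (hδpos k).le
      positivity
    rw [hnorm]
    have hden : 0 < a ^ 2 + 1 := by positivity
    have key : a ^ 2 ≤ (a ^ 2 + 1) ^ 2 := by nlinarith
    calc ((δ k / (a ^ 2 + 1)) * a) ^ 2 = δ k ^ 2 * (a ^ 2 / (a ^ 2 + 1) ^ 2) := by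
          field_simp
      _ ≤ δ k ^ 2 * 1 := by
          apply mul_le_mul_of_nonneg_left _ (by positivity)
          rw [div_le_one (by positivity)]; exact key
      _ = δ k * δ k := by ring
      _ ≤ 1 * δ k := by
          apply mul_le_mul_of_nonneg_right (hδle1 k) (hδpos k).le
      _ = δ k := one_mul _
  have hmus : Summable (fun k => ‖mu (k + 1) - mu k‖ ^ 2) :=
    Summable.of_nonneg_of_le (fun k => by positivity) hmubd hδsum
  refine ⟨hmus, ?_⟩
  -- lam increment
  have hlambd : ∀ k, ‖lam (k + 1) - lam k‖ ^ 2 ≤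
      2 * ‖mu (k + 1) - mu k‖ ^ 2 + 2 * (ρ ^ 2 * Lc ^ 2) * ‖x (k + 1) - x k‖ ^ 2 := by
    intro k
    have h1 : lam (k + 1) - lam k = (mu (k + 1) - mu k) + ρ • (c (x (k + 1)) - c (x k)) := by
      rw [hlam (k + 1), hlam k, smul_sub]; abel
    have h2 : ‖lam (k + 1) - lam k‖ ≤ ‖mu (k + 1) - mu k‖ + ρ * (Lc * ‖x (k + 1) - x k‖) := by
      rw [h1]
      refine (norm_add_le _ _).trans ?_
      gcongr
      rw [norm_smul, Real.norm_eq_abs, abs_of_pos hρ]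
      exact mul_le_mul_of_nonneg_left (hLipc _ _) hρ.le
    have h3 : (0:ℝ) ≤ ‖lam (k + 1) - lam k‖ := norm_nonneg _
    nlinarith [sq_nonneg (‖mu (k + 1) - mu k‖ - ρ * (Lc * ‖x (k + 1) - x k‖)),
      norm_nonneg (mu (k + 1) - mu k), norm_nonneg (x (k + 1) - x k)]
  have hsum2 : Summable (fun k => 2 * ‖mu (k + 1) - mu k‖ ^ 2 +
      2 * (ρ ^ 2 * Lc ^ 2) * ‖x (k + 1) - x k‖ ^ 2) :=
    ((hmus.mul_left 2).add (hxsum.mul_left _))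
  exact Summable.of_nonneg_of_le (fun k => by positivity) hlambd hsum2
end
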